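/- arXiv:math/0306301 — 2 statements merged into one kernel-verified Lean document; each statement's English description precedes it below -/
import Mathlib

section
/- Let Φ be a Leonard system with scalars a_i = tr(E*_i A) and x_i = tr(E*_i A E*_{i−1} A), and define monic polynomials p_0, …, p_{d+1} ∈ K[λ] by p_0 = 1 and λ p_i = p_{i+1} + a_i p_i + x_i p_{i−1} (0 ≤ i ≤ d, with x_0 = 0, p_{−1} = 0). Then p_{d+1} is both the minimal polynomial and the characteristic polynomial of A, and p_{d+1} = ∏_{i=0}^d (λ − θ_i), where θ_0, …, θ_d are the eigenvalues of A in the ordering given by E_0, …, E_d. -/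
open Matrix Polynomial

def IsTridiag {K : Type*} [Field K] {n : ℕ} (M : Matrix (Fin n) (Fin n) K) : Prop :=
  ∀ i j : Fin n, ((i : ℕ) + 1 < j ∨ (j : ℕ) + 1 < i) → M i j = 0

def IsIrredTridiag {K : Type*} [Field K] {n : ℕ} (M : Matrix (Fin n) (Fin n) K) : Prop :=
  IsTridiag M ∧ ∀ i j : Fin n, ((i : ℕ) + 1 = j ∨ (j : ℕ) + 1 = i) → M i j ≠ 0

/-- Entry of a matrix with natural-number indices; `0` when out of range. -/
def mentry {K : Type*} [Field K] {n : ℕ} (M : Matrix (Fin n) (Fin n) K) (i j : ℕ) : K :=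
  if h : i < n ∧ j < n then M ⟨i, h.1⟩ ⟨j, h.2⟩ else 0

/-- A family indexed by `Fin (d+1)` viewed as indexed by `ℕ`, with value `0` out of range. -/
def natIdx {d : ℕ} {M : Type*} [Zero M] (E : Fin (d+1) → M) (n : ℕ) : M :=
  if h : n < d + 1 then E ⟨n, h⟩ else 0

/-- A Leonard system of diameter `d` in the matrix algebra `Mat_{d+1}(K)`:
`A`, `As` are multiplicity-free with eigenvalues `θ i`, `θs i` and primitive
idempotents `E i`, `Es i`, satisfying the tridiagonal conditions. -/
structure LeonardSystem (K : Type*) [Field K] (d : ℕ) where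
  A : Matrix (Fin (d+1)) (Fin (d+1)) K
  As : Matrix (Fin (d+1)) (Fin (d+1)) K
  E : Fin (d+1) → Matrix (Fin (d+1)) (Fin (d+1)) K
  Es : Fin (d+1) → Matrix (Fin (d+1)) (Fin (d+1)) K
  θ : Fin (d+1) → K
  θs : Fin (d+1) → K
  θ_inj : Function.Injective θ
  θs_inj : Function.Injective θs
  E_ne : ∀ i, E i ≠ 0
  Es_ne : ∀ i, Es i ≠ 0
  E_mul : ∀ i j, E i * E j = if i = j then E i else 0
  Es_mul : ∀ i j, Es i * Es j = if i = j then Es i else 0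
  E_sum : ∑ i, E i = 1
  Es_sum : ∑ i, Es i = 1
  A_eq : A = ∑ i, θ i • E i
  As_eq : As = ∑ i, θs i • Es i
  EAsE_zero : ∀ i j : Fin (d+1), ((i:ℕ) + 1 < j ∨ (j:ℕ) + 1 < i) → E i * As * E j = 0
  EAsE_ne : ∀ i j : Fin (d+1), ((i:ℕ) + 1 = j ∨ (j:ℕ) + 1 = i) → E i * As * E j ≠ 0
  EsAEs_zero : ∀ i j : Fin (d+1), ((i:ℕ) + 1 < j ∨ (j:ℕ) + 1 < i) → Es i * A * Es j = 0
  EsAEs_ne : ∀ i j : Fin (d+1), ((i:ℕ) + 1 = j ∨ (j:ℕ) + 1 = i) → Es i * A * Es j ≠ 0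

/-- A Leonard pair in `Mat_{d+1}(K)`. -/
structure LeonardPair (K : Type*) [Field K] (d : ℕ) where
  A : Matrix (Fin (d+1)) (Fin (d+1)) K
  As : Matrix (Fin (d+1)) (Fin (d+1)) K
  cond1 : ∃ P : Matrix (Fin (d+1)) (Fin (d+1)) K, IsUnit P ∧
    IsIrredTridiag (P⁻¹ * A * P) ∧ (P⁻¹ * As * P).IsDiag
  cond2 : ∃ P : Matrix (Fin (d+1)) (Fin (d+1)) K, IsUnit P ∧
    (P⁻¹ * A * P).IsDiag ∧ IsIrredTridiag (P⁻¹ * As * P)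

section Helpers

variable {K : Type*} [Field K]

lemma exists_mulVec_ne_zero {n : ℕ} {M : Matrix (Fin n) (Fin n) K} (h : M ≠ 0) :
    ∃ z, M *ᵥ z ≠ 0 := by
  by_contra hc
  push_neg at hc
  apply h
  ext i j
  have := congrFun (hc (Pi.single j 1)) i
  simpa [Matrix.mulVec_single] using this

lemma sum_mulVec' {n : ℕ} {ι : Type*} (s : Finset ι) (M : ι → Matrix (Fin n) (Fin n) K)
    (v : Fin n → K) : (∑ i ∈ s, M i) *ᵥ v = ∑ i ∈ s, M i *ᵥ v := by
  induction s using Finset.cons_induction with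
  | empty => simp
  | cons a s ha ih => simp [Matrix.add_mulVec, ih]

lemma mulVec_sumVec {n : ℕ} {ι : Type*} (s : Finset ι) (M : Matrix (Fin n) (Fin n) K)
    (v : ι → Fin n → K) : M *ᵥ (∑ i ∈ s, v i) = ∑ i ∈ s, M *ᵥ v i := by
  induction s using Finset.cons_induction with
  | empty => simp
  | cons a s ha ih => simp [Matrix.mulVec_add, ih]

lemma trace_eq_sum_repr {n : ℕ} (b : Module.Basis (Fin n) K (Fin n → K))
    (M : Matrix (Fin n) (Fin n) K) :
    M.trace = ∑ j, b.repr (M *ᵥ b j) j := by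
  have h1 : M.trace = LinearMap.trace K _ (Matrix.toLin' M) := by
    rw [LinearMap.trace_eq_matrix_trace K (Pi.basisFun K (Fin n)),
      LinearMap.toMatrix_eq_toMatrix', LinearMap.toMatrix'_toLin']
  rw [h1, LinearMap.trace_eq_matrix_trace K b]
  rw [Matrix.trace]
  congr 1
  funext j
  rw [Matrix.diag_apply, LinearMap.toMatrix_apply, Matrix.toLin'_apply]

lemma exim {d : ℕ} (Es : Fin (d+1) → Matrix (Fin (d+1)) (Fin (d+1)) K)
    (hne : ∀ i, Es i ≠ 0)
    (hmul : ∀ i j, Es i * Es j = if i = j then Es i else 0)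
    (i : Fin (d+1)) {u : Fin (d+1) → K} (hu : u ≠ 0) (hmem : Es i *ᵥ u = u)
    (z : Fin (d+1) → K) : ∃ c : K, Es i *ᵥ z = c • u := by
  classical
  have hex : ∀ j : Fin (d+1), ∃ y, Es j *ᵥ y ≠ 0 := fun j => exists_mulVec_ne_zero (hne j)
  choose zz hzz using hex
  set uu : Fin (d+1) → (Fin (d+1) → K) := fun j => if j = i then u else Es j *ᵥ zz j with huu
  have huu_mem : ∀ j, Es j *ᵥ uu j = uu j := by
    intro j
    by_cases hj : j = i
    · subst hj; simp only [huu, if_pos rfl]; exact hmem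
    · simp only [huu, if_neg hj]
      rw [Matrix.mulVec_mulVec, hmul, if_pos rfl]
  have huu_ne : ∀ j, uu j ≠ 0 := by
    intro j
    by_cases hj : j = i
    · subst hj; simpa [huu] using hu
    · simpa [huu, hj] using hzz j
  have huu_orth : ∀ k j, k ≠ j → Es k *ᵥ uu j = 0 := by
    intro k j hkj
    rw [← huu_mem j, Matrix.mulVec_mulVec, hmul, if_neg hkj, Matrix.zero_mulVec]
  have li : LinearIndependent K uu := by
    rw [Fintype.linearIndependent_iff]
    intro g hg k
    have := congrArg (fun v => Es k *ᵥ v) hg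
    simp only [Matrix.mulVec_zero] at this
    rw [mulVec_sumVec] at this
    have h2 : ∀ j ∈ Finset.univ, j ≠ k → Es k *ᵥ (g j • uu j) = 0 := by
      intro j _ hjk
      rw [Matrix.mulVec_smul, huu_orth k j (Ne.symm hjk), smul_zero]
    rw [Finset.sum_eq_single k (fun j _ hj => h2 j (Finset.mem_univ j) hj)
      (fun h => absurd (Finset.mem_univ k) h)] at this
    rw [Matrix.mulVec_smul, huu_mem k] at this
    exact (smul_eq_zero.mp this).resolve_right (huu_ne k)
  have bcard : Fintype.card (Fin (d+1)) = Module.finrank K (Fin (d+1) → K) := by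
    simp [Module.finrank_fintype_fun_eq_card]
  let b : Module.Basis (Fin (d+1)) K (Fin (d+1) → K) := basisOfLinearIndependentOfCardEqFinrank li bcard
  have hb : ∀ j, b j = uu j := fun j =>
    congrFun (coe_basisOfLinearIndependentOfCardEqFinrank li bcard) j
  set y := Es i *ᵥ z with hy
  refine ⟨b.repr y i, ?_⟩
  have h3 : y = ∑ j, b.repr y j • uu j := by
    conv_lhs => rw [← b.sum_repr y]
    exact Finset.sum_congr rfl fun j _ => by rw [hb]
  have h4 : Es i *ᵥ y = y := by
    rw [hy, Matrix.mulVec_mulVec, hmul, if_pos rfl]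
  calc Es i *ᵥ z = Es i *ᵥ y := by rw [h4]
    _ = ∑ j, b.repr y j • (Es i *ᵥ uu j) := by
        conv_lhs => rw [h3, mulVec_sumVec]
        exact Finset.sum_congr rfl fun j _ => by rw [Matrix.mulVec_smul]
    _ = b.repr y i • u := by
        rw [Finset.sum_eq_single i (fun j _ hj => by rw [huu_orth i j (Ne.symm hj), smul_zero])
          (fun h => absurd (Finset.mem_univ i) h)]
        rw [huu_mem i]
        simp [huu]

lemma sum_range_triple {V : Type*} [AddCommMonoid V] {N m : ℕ} (f : ℕ → V) (h1 : 1 ≤ m)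
    (h2 : m + 1 < N) (hz : ∀ n, n + 1 < m ∨ m + 1 < n → f n = 0) :
    ∑ n ∈ Finset.range N, f n = f (m-1) + f m + f (m+1) := by
  classical
  have hsub : ({m-1, m, m+1} : Finset ℕ) ⊆ Finset.range N := by
    intro t ht
    simp only [Finset.mem_insert, Finset.mem_singleton] at ht
    rw [Finset.mem_range]; omega
  rw [← Finset.sum_subset hsub (by
    intro t _ htm
    simp only [Finset.mem_insert, Finset.mem_singleton] at htm
    push_neg at htm
    exact hz t (by omega))]
  rw [Finset.sum_insert (by simp only [Finset.mem_insert, Finset.mem_singleton]; omega),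
    Finset.sum_insert (by simp only [Finset.mem_singleton]; omega), Finset.sum_singleton]
  try rw [add_assoc]

lemma sum_range_pair {V : Type*} [AddCommMonoid V] {N : ℕ} (f : ℕ → V)
    (h2 : 1 < N) (hz : ∀ n, 1 < n → f n = 0) :
    ∑ n ∈ Finset.range N, f n = f 0 + f 1 := by
  classical
  have hsub : ({0, 1} : Finset ℕ) ⊆ Finset.range N := by
    intro t ht
    simp only [Finset.mem_insert, Finset.mem_singleton] at ht
    rw [Finset.mem_range]; omega
  rw [← Finset.sum_subset hsub (by
    intro t _ htm
    simp only [Finset.mem_insert, Finset.mem_singleton] at htm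
    push_neg at htm
    exact hz t (by omega))]
  simp

end Helpers

/-- The standard sequence of vectors attached to a Leonard system and a start vector. -/
noncomputable def wvec {K : Type*} [Field K] {d : ℕ} (L : LeonardSystem K d)
    (v0 : Fin (d+1) → K) : ℕ → (Fin (d+1) → K)
  | 0 => v0
  | n+1 => natIdx L.Es (n+1) *ᵥ (L.A *ᵥ wvec L v0 n)

theorem stmt11 {K : Type*} [Field K] {d : ℕ} (L : LeonardSystem K d)
    (a x : ℕ → K)
    (ha : ∀ i : Fin (d+1), a (i:ℕ) = Matrix.trace (L.Es i * L.A))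
    (hx0 : x 0 = 0)
    (hx : ∀ i : Fin (d+1), 1 ≤ (i:ℕ) →
      x (i:ℕ) = Matrix.trace (L.Es i * L.A * natIdx L.Es ((i:ℕ) - 1) * L.A))
    (p : ℕ → Polynomial K) (hp0 : p 0 = 1)
    (hrec : ∀ i : ℕ, i ≤ d →
      Polynomial.X * p i = p (i+1) + Polynomial.C (a i) * p i + Polynomial.C (x i) * p (i-1))
    :
    p (d+1) = minpoly K L.A ∧
    p (d+1) = L.A.charpoly ∧
    p (d+1) = ∏ i : Fin (d+1), (Polynomial.X - Polynomial.C (L.θ i)) := by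
  classical
  -- ℕ-indexed idempotent family
  have hFlt : ∀ (n : ℕ) (h : n < d+1), natIdx L.Es n = L.Es ⟨n, h⟩ := fun n h => dif_pos h
  have hFge : ∀ (n : ℕ), d+1 ≤ n → natIdx L.Es n = 0 := fun n h => dif_neg (by omega)
  have hFmul : ∀ m n : ℕ, natIdx L.Es m * natIdx L.Es n =
      if m = n then natIdx L.Es m else 0 := by
    intro m n
    by_cases hm : m < d+1
    · by_cases hn : n < d+1
      · rw [hFlt m hm, hFlt n hn, L.Es_mul]
        by_cases h : m = n
        · subst h; simp
        · rw [if_neg (by simp [Fin.mk.injEq]; omega), if_neg h]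
      · rw [hFge n (by omega), mul_zero, if_neg (by omega)]
    · simp [hFge m (by omega)]
  have hFA0 : ∀ m n : ℕ, (m + 1 < n ∨ n + 1 < m) →
      natIdx L.Es m * L.A * natIdx L.Es n = 0 := by
    intro m n h
    by_cases hm : m < d+1
    · by_cases hn : n < d+1
      · rw [hFlt m hm, hFlt n hn]
        exact L.EsAEs_zero ⟨m, hm⟩ ⟨n, hn⟩ h
      · rw [hFge n (by omega), mul_zero]
    · rw [hFge m (by omega), zero_mul, zero_mul]
  -- the start vector
  obtain ⟨z0, hz0⟩ := exists_mulVec_ne_zero (L.Es_ne ⟨0, by omega⟩)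
  set v0 : Fin (d+1) → K := L.Es ⟨0, by omega⟩ *ᵥ z0 with hv0def
  have hv0ne : v0 ≠ 0 := hz0
  have hv0mem : natIdx L.Es 0 *ᵥ v0 = v0 := by
    rw [hFlt 0 (by omega), hv0def, Matrix.mulVec_mulVec, L.Es_mul, if_pos rfl]
  set w : ℕ → (Fin (d+1) → K) := wvec L v0 with hwdef
  have hwsucc : ∀ n : ℕ, w (n+1) = natIdx L.Es (n+1) *ᵥ (L.A *ᵥ w n) := fun n => rfl
  have hwmem : ∀ n : ℕ, natIdx L.Es n *ᵥ w n = w n := by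
    intro n
    cases n with
    | zero => exact hv0mem
    | succ n =>
      calc natIdx L.Es (n+1) *ᵥ w (n+1)
          = natIdx L.Es (n+1) *ᵥ (natIdx L.Es (n+1) *ᵥ (L.A *ᵥ w n)) := by rw [hwsucc n]
        _ = (natIdx L.Es (n+1) * natIdx L.Es (n+1)) *ᵥ (L.A *ᵥ w n) :=
            Matrix.mulVec_mulVec _ _ _
        _ = natIdx L.Es (n+1) *ᵥ (L.A *ᵥ w n) := by rw [hFmul, if_pos rfl]
        _ = w (n+1) := (hwsucc n).symm
  have hworth : ∀ m n : ℕ, m ≠ n → natIdx L.Es m *ᵥ w n = 0 := by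
    intro m n h
    rw [← hwmem n, Matrix.mulVec_mulVec, hFmul, if_neg h, Matrix.zero_mulVec]
  -- the rank-one property, transported to ℕ indices
  have hexim : ∀ (m : ℕ), m < d+1 → ∀ (u : Fin (d+1) → K), u ≠ 0 →
      natIdx L.Es m *ᵥ u = u → ∀ z, ∃ c : K, natIdx L.Es m *ᵥ z = c • u := by
    intro m hm u hu hmem z
    rw [hFlt m hm] at hmem ⊢
    exact exim L.Es L.Es_ne L.Es_mul ⟨m, hm⟩ hu hmem z
  -- nonvanishing
  have hwne : ∀ n : ℕ, n ≤ d → w n ≠ 0 := by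
    intro n
    induction n with
    | zero => intro _; exact hv0ne
    | succ n ih =>
      intro hn
      have hn' : n ≤ d := by omega
      have hN : natIdx L.Es (n+1) * L.A * natIdx L.Es n ≠ 0 := by
        rw [hFlt (n+1) (by omega), hFlt n (by omega)]
        exact L.EsAEs_ne ⟨n+1, by omega⟩ ⟨n, by omega⟩ (Or.inr rfl)
      obtain ⟨z, hz⟩ := exists_mulVec_ne_zero hN
      obtain ⟨c, hc⟩ := hexim n (by omega) (w n) (ih hn') (hwmem n) z
      intro hcon
      apply hz
      calc (natIdx L.Es (n+1) * L.A * natIdx L.Es n) *ᵥ z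
          = (natIdx L.Es (n+1) * L.A) *ᵥ (natIdx L.Es n *ᵥ z) :=
            (Matrix.mulVec_mulVec _ _ _).symm
        _ = natIdx L.Es (n+1) *ᵥ (L.A *ᵥ (natIdx L.Es n *ᵥ z)) :=
            (Matrix.mulVec_mulVec _ _ _).symm
        _ = c • (natIdx L.Es (n+1) *ᵥ (L.A *ᵥ w n)) := by
            rw [hc, Matrix.mulVec_smul, Matrix.mulVec_smul]
        _ = c • w (n+1) := by rw [← hwsucc n]
        _ = 0 := by rw [hcon, smul_zero]
  -- basis from w
  have libasis : LinearIndependent K (fun j : Fin (d+1) => w (j : ℕ)) := by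
    rw [Fintype.linearIndependent_iff]
    intro g hg k
    have := congrArg (fun v => natIdx L.Es (k : ℕ) *ᵥ v) hg
    simp only [Matrix.mulVec_zero] at this
    rw [mulVec_sumVec] at this
    rw [Finset.sum_eq_single k (fun j _ hj => by
        rw [Matrix.mulVec_smul, hworth (k : ℕ) (j : ℕ) (by
          simp only [ne_eq, Fin.val_inj]; exact fun h => hj (h.symm ▸ rfl)), smul_zero])
      (fun h => absurd (Finset.mem_univ k) h)] at this
    rw [Matrix.mulVec_smul, hwmem] at this
    exact (smul_eq_zero.mp this).resolve_right (hwne (k : ℕ) (by omega))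
  have bcard : Fintype.card (Fin (d+1)) = Module.finrank K (Fin (d+1) → K) := by
    simp [Module.finrank_fintype_fun_eq_card]
  set b : Module.Basis (Fin (d+1)) K (Fin (d+1) → K) :=
    basisOfLinearIndependentOfCardEqFinrank libasis bcard with hbdef
  have hb : ∀ j : Fin (d+1), b j = w (j : ℕ) := fun j =>
    congrFun (coe_basisOfLinearIndependentOfCardEqFinrank libasis bcard) j
  -- anything in the image of Es m is a multiple of w m
  have hline : ∀ (m : ℕ), m ≤ d → ∀ (z : Fin (d+1) → K),
      ∃ c : K, natIdx L.Es m *ᵥ z = c • w m :=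
    fun m hm z => hexim m (by omega) (w m) (hwne m hm) (hwmem m) z
  -- the diagonal coefficients
  have hdiag : ∀ (m : ℕ), m ≤ d → natIdx L.Es m *ᵥ (L.A *ᵥ w m) = a m • w m := by
    intro m hm
    obtain ⟨c, hc⟩ := hline m hm (L.A *ᵥ w m)
    have hm' : m < d + 1 := by omega
    have hac : a m = c := by
      have ham : a m = Matrix.trace (L.Es ⟨m, hm'⟩ * L.A) := ha ⟨m, hm'⟩
      have ht1 : Matrix.trace (L.Es ⟨m, hm'⟩ * L.A)
          = Matrix.trace (L.Es ⟨m, hm'⟩ * L.A * L.Es ⟨m, hm'⟩) := by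
        conv_rhs => rw [Matrix.trace_mul_comm]
        rw [← mul_assoc, L.Es_mul, if_pos rfl]
      rw [ham, ht1, trace_eq_sum_repr b]
      rw [Finset.sum_eq_single (⟨m, hm'⟩ : Fin (d+1))
        (fun j _ hj => by
          have hv : (L.Es ⟨m,hm'⟩ * L.A * L.Es ⟨m,hm'⟩) *ᵥ b j = 0 := by
            calc (L.Es ⟨m,hm'⟩ * L.A * L.Es ⟨m,hm'⟩) *ᵥ b j
                = (L.Es ⟨m,hm'⟩ * L.A) *ᵥ (L.Es ⟨m,hm'⟩ *ᵥ b j) :=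
                  (Matrix.mulVec_mulVec _ _ _).symm
              _ = 0 := by
                  rw [hb j, ← hFlt m hm', hworth m (j:ℕ) (fun h => hj (Fin.ext h.symm)),
                    Matrix.mulVec_zero]
          rw [hv, _root_.map_zero]; simp)
        (fun h => absurd (Finset.mem_univ _) h)]
      have hv2 : (L.Es ⟨m,hm'⟩ * L.A * L.Es ⟨m,hm'⟩) *ᵥ b ⟨m,hm'⟩ = c • w m := by
        calc (L.Es ⟨m,hm'⟩ * L.A * L.Es ⟨m,hm'⟩) *ᵥ b ⟨m,hm'⟩
            = (L.Es ⟨m,hm'⟩ * L.A) *ᵥ (L.Es ⟨m,hm'⟩ *ᵥ b ⟨m,hm'⟩) :=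
              (Matrix.mulVec_mulVec _ _ _).symm
          _ = (L.Es ⟨m,hm'⟩ * L.A) *ᵥ w m := by rw [hb ⟨m,hm'⟩, ← hFlt m hm', hwmem m]
          _ = L.Es ⟨m,hm'⟩ *ᵥ (L.A *ᵥ w m) := (Matrix.mulVec_mulVec _ _ _).symm
          _ = c • w m := by rw [← hFlt m hm']; exact hc
      rw [hv2, show w m = b ⟨m,hm'⟩ from (hb ⟨m,hm'⟩).symm, _root_.map_smul, Module.Basis.repr_self,
        Finsupp.smul_apply, Finsupp.single_eq_same, smul_eq_mul, mul_one]
    rw [hc, hac]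
  -- the subdiagonal coefficients
  have hsubd : ∀ (m : ℕ), 1 ≤ m → m ≤ d →
      natIdx L.Es (m-1) *ᵥ (L.A *ᵥ w m) = x m • w (m-1) := by
    intro m h1 hm
    have hm' : m < d + 1 := by omega
    obtain ⟨c, hc⟩ := hexim (m-1) (by omega) (w (m-1)) (hwne (m-1) (by omega))
      (hwmem (m-1)) (L.A *ᵥ w m)
    have hxc : x m = c := by
      have hxm : x m = Matrix.trace (L.Es ⟨m, hm'⟩ * L.A * natIdx L.Es (m-1) * L.A) :=
        hx ⟨m, hm'⟩ h1
      have hSv : ∀ v, (L.Es ⟨m, hm'⟩ * L.A * natIdx L.Es (m-1) * L.A) *ᵥ v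
          = L.Es ⟨m,hm'⟩ *ᵥ (L.A *ᵥ (natIdx L.Es (m-1) *ᵥ (L.A *ᵥ v))) := by
        intro v
        calc (L.Es ⟨m, hm'⟩ * L.A * natIdx L.Es (m-1) * L.A) *ᵥ v
            = (L.Es ⟨m,hm'⟩ * L.A * natIdx L.Es (m-1)) *ᵥ (L.A *ᵥ v) :=
              (Matrix.mulVec_mulVec _ _ _).symm
          _ = (L.Es ⟨m,hm'⟩ * L.A) *ᵥ (natIdx L.Es (m-1) *ᵥ (L.A *ᵥ v)) :=
              (Matrix.mulVec_mulVec _ _ _).symm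
          _ = L.Es ⟨m,hm'⟩ *ᵥ (L.A *ᵥ (natIdx L.Es (m-1) *ᵥ (L.A *ᵥ v))) :=
              (Matrix.mulVec_mulVec _ _ _).symm
      rw [hxm, trace_eq_sum_repr b]
      rw [Finset.sum_eq_single (⟨m, hm'⟩ : Fin (d+1))
        (fun j _ hj => by
          obtain ⟨cj, hcj⟩ := hline m hm (L.A *ᵥ (natIdx L.Es (m-1) *ᵥ (L.A *ᵥ b j)))
          rw [hSv, ← hFlt m hm', hcj, show w m = b ⟨m,hm'⟩ from (hb ⟨m,hm'⟩).symm, _root_.map_smul,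
            Module.Basis.repr_self, Finsupp.smul_apply,
            Finsupp.single_eq_of_ne hj, smul_zero])
        (fun h => absurd (Finset.mem_univ _) h)]
      have hv2 : (L.Es ⟨m, hm'⟩ * L.A * natIdx L.Es (m-1) * L.A) *ᵥ b ⟨m,hm'⟩ = c • w m := by
        rw [hSv, hb ⟨m,hm'⟩]
        rw [show (((⟨m,hm'⟩ : Fin (d+1)) : ℕ)) = m from rfl]
        rw [hc, Matrix.mulVec_smul, Matrix.mulVec_smul]
        congr 1
        rw [← hFlt m hm']
        have hws := hwsucc (m-1)
        rw [show m - 1 + 1 = m from by omega] at hws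
        exact hws.symm
      rw [hv2, show w m = b ⟨m,hm'⟩ from (hb ⟨m,hm'⟩).symm, _root_.map_smul, Module.Basis.repr_self,
        Finsupp.smul_apply, Finsupp.single_eq_same, smul_eq_mul, mul_one]
    rw [hc, hxc]
  -- three-term expansion of A *ᵥ w m
  have hexp : ∀ (m : ℕ), m ≤ d →
      L.A *ᵥ w m = w (m+1) + a m • w m + x m • w (m-1) := by
    intro m hm
    have hsum : ∑ n ∈ Finset.range (d+2), natIdx L.Es n *ᵥ (L.A *ᵥ w m) = L.A *ᵥ w m := by
      rw [show d + 2 = (d+1) + 1 from rfl, Finset.sum_range_succ, hFge (d+1) le_rfl,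
        Matrix.zero_mulVec, add_zero,
        ← Fin.sum_univ_eq_sum_range (fun n => natIdx L.Es n *ᵥ (L.A *ᵥ w m)) (d+1)]
      rw [show (∑ j : Fin (d+1), natIdx L.Es (j:ℕ) *ᵥ (L.A *ᵥ w m))
          = ∑ j : Fin (d+1), L.Es j *ᵥ (L.A *ᵥ w m) from
        Finset.sum_congr rfl fun j _ => by rw [hFlt (j:ℕ) j.isLt, Fin.eta]]
      rw [← sum_mulVec', L.Es_sum, Matrix.one_mulVec]
    have hvanish : ∀ n, n + 1 < m ∨ m + 1 < n → natIdx L.Es n *ᵥ (L.A *ᵥ w m) = 0 := by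
      intro n hn
      calc natIdx L.Es n *ᵥ (L.A *ᵥ w m)
          = natIdx L.Es n *ᵥ (L.A *ᵥ (natIdx L.Es m *ᵥ w m)) := by rw [hwmem m]
        _ = natIdx L.Es n *ᵥ ((L.A * natIdx L.Es m) *ᵥ w m) := by
              rw [Matrix.mulVec_mulVec (w m) L.A (natIdx L.Es m)]
        _ = (natIdx L.Es n * (L.A * natIdx L.Es m)) *ᵥ w m := Matrix.mulVec_mulVec _ _ _
        _ = 0 := by rw [← mul_assoc, hFA0 n m hn, Matrix.zero_mulVec]
    by_cases hm0 : m = 0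
    · subst hm0
      rw [← hsum, sum_range_pair _ (by omega) (fun n hn => hvanish n (by omega))]
      rw [hx0, zero_smul, add_zero, hdiag 0 hm]
      show a 0 • w 0 + w (0+1) = w (0+1) + a 0 • w 0
      exact add_comm _ _
    · rw [← hsum, sum_range_triple _ (by omega) (by omega) hvanish]
      rw [hdiag m hm, ← hwsucc m, hsubd m (by omega) hm]
      abel
  -- the polynomials are monic of the right degree
  have hmon : ∀ i : ℕ, i ≤ d+1 → (p i).Monic ∧ (p i).natDegree = i := by
    intro i
    induction i using Nat.strong_induction_on with
    | _ i ih =>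
      intro hi
      match i, hi with
      | 0, _ => rw [hp0]; exact ⟨monic_one, natDegree_one⟩
      | (k+1), hi =>
        have hk := ih k (by omega) (by omega)
        have hk1 := ih (k-1) (by omega) (by omega)
        have hpk : p (k+1) = X * p k - (C (a k) * p k + C (x k) * p (k-1)) := by
          linear_combination -(hrec k (by omega))
        have hq : (X * p k).Monic := monic_X.mul hk.1
        have hqd : (X * p k).natDegree = k + 1 := by
          have h2 := monic_X.natDegree_mul hk.1
          rw [h2, natDegree_X, hk.2]
          omega
        have hqdeg : (X * p k).degree = ((k+1 : ℕ) : WithBot ℕ) := by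
          rw [degree_eq_natDegree hq.ne_zero, hqd]
        have hrd : (C (a k) * p k + C (x k) * p (k-1)).degree < (X * p k).degree := by
          have hCm : ∀ (y : K) (q : K[X]), (C y * q).degree ≤ q.degree := by
            intro y q
            rw [← smul_eq_C_mul]
            exact degree_smul_le _ _
          have h2 : (C (a k) * p k).degree ≤ ((k : ℕ) : WithBot ℕ) :=
            (hCm _ _).trans (by have h := degree_le_natDegree (p := p k); rwa [hk.2] at h)
          have h3 : (C (x k) * p (k-1)).degree ≤ ((k : ℕ) : WithBot ℕ) := by
            refine (hCm _ _).trans (le_trans ?_ (?_ : (((k-1 : ℕ)) : WithBot ℕ) ≤ _))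
            · have h := degree_le_natDegree (p := p (k-1)); rwa [hk1.2] at h
            · exact_mod_cast (by omega : k - 1 ≤ k)
          refine lt_of_le_of_lt (degree_add_le _ _) ?_
          rw [hqdeg]
          exact lt_of_le_of_lt (max_le h2 h3) (by exact_mod_cast Nat.lt_succ_self k)
        constructor
        · rw [hpk]; exact hq.sub_of_left hrd
        · rw [hpk]
          have h4 : (X * p k - (C (a k) * p k + C (x k) * p (k-1))).degree
              = ((k+1 : ℕ) : WithBot ℕ) := by
            rw [degree_sub_eq_left_of_degree_lt hrd, hqdeg]
          exact natDegree_eq_of_degree_eq_some h4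
  -- action of p i on the basis
  have haev : ∀ i : ℕ, i ≤ d+1 → (aeval L.A (p i)) *ᵥ w 0 = w i := by
    intro i
    induction i using Nat.strong_induction_on with
    | _ i ih =>
      intro hi
      match i, hi with
      | 0, _ => rw [hp0, _root_.map_one, Matrix.one_mulVec]
      | (k+1), hi =>
        have hk := ih k (by omega) (by omega)
        have hk1 := ih (k-1) (by omega) (by omega)
        have h1 : L.A *ᵥ w k = (aeval L.A (p (k+1))) *ᵥ w 0 + a k • w k + x k • w (k-1) := by
          calc L.A *ᵥ w k = (L.A * aeval L.A (p k)) *ᵥ w 0 := by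
                rw [← hk, Matrix.mulVec_mulVec]
            _ = (aeval L.A (X * p k)) *ᵥ w 0 := by rw [_root_.map_mul, aeval_X]
            _ = (aeval L.A (p (k+1) + C (a k) * p k + C (x k) * p (k-1))) *ᵥ w 0 := by
                rw [hrec k (by omega)]
            _ = (aeval L.A (p (k+1))) *ᵥ w 0 + a k • ((aeval L.A (p k)) *ᵥ w 0)
                + x k • ((aeval L.A (p (k-1))) *ᵥ w 0) := by
                simp only [_root_.map_add, _root_.map_mul, aeval_C, Matrix.add_mulVec, ← Algebra.smul_def,
                  Matrix.smul_mulVec]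
            _ = (aeval L.A (p (k+1))) *ᵥ w 0 + a k • w k + x k • w (k-1) := by rw [hk, hk1]
        have h2 := hexp k (by omega)
        have h3 : w (k+1) + a k • w k + x k • w (k-1)
            = (aeval L.A (p (k+1))) *ᵥ w 0 + a k • w k + x k • w (k-1) := h2.symm.trans h1
        exact (add_right_cancel (add_right_cancel h3)).symm
  -- p (d+1) annihilates A
  have hPtop : (aeval L.A (p (d+1))) *ᵥ w 0 = 0 := by
    rw [haev (d+1) le_rfl, hwsucc d, hFge (d+1) le_rfl, Matrix.zero_mulVec]
  have hP0 : aeval L.A (p (d+1)) = 0 := by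
    have hall : ∀ v : Fin (d+1) → K, (aeval L.A (p (d+1))) *ᵥ v = 0 := by
      intro v
      have hbj : ∀ j : Fin (d+1), (aeval L.A (p (d+1))) *ᵥ b j = 0 := by
        intro j
        rw [hb j, ← haev (j:ℕ) (by omega), Matrix.mulVec_mulVec, ← _root_.map_mul,
          mul_comm (p (d+1)) (p (j:ℕ)), _root_.map_mul, ← Matrix.mulVec_mulVec, hPtop,
          Matrix.mulVec_zero]
      conv_lhs => rw [← b.sum_repr v]
      rw [mulVec_sumVec]
      refine Finset.sum_eq_zero fun j _ => ?_
      rw [Matrix.mulVec_smul, hbj, smul_zero]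
    ext i j
    have := congrFun (hall (Pi.single j 1)) i
    simpa [Matrix.mulVec_single] using this
  -- eigenvalues are roots of any annihilating polynomial
  have hAE : ∀ i, L.A * L.E i = L.θ i • L.E i := by
    intro i
    rw [L.A_eq, Finset.sum_mul]
    rw [Finset.sum_eq_single i (fun j _ hj => by
      rw [smul_mul_assoc, L.E_mul, if_neg hj, smul_zero])
      (fun h => absurd (Finset.mem_univ i) h)]
    rw [smul_mul_assoc, L.E_mul, if_pos rfl]
  have hpowE : ∀ (n : ℕ) (i : Fin (d+1)), L.A ^ n * L.E i = (L.θ i) ^ n • L.E i := by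
    intro n i
    induction n with
    | zero => simp
    | succ n ihn =>
      rw [pow_succ, mul_assoc, hAE i, Matrix.mul_smul, ihn, smul_smul]
      congr 1
      ring
  have hevalE : ∀ (f : K[X]) (i : Fin (d+1)),
      (aeval L.A f) * L.E i = (f.eval (L.θ i)) • L.E i := by
    intro f
    induction f using Polynomial.induction_on' with
    | add f g hf hg => intro i; rw [_root_.map_add, add_mul, hf, hg, eval_add, add_smul]
    | monomial n c =>
      intro i
      rw [aeval_monomial, eval_monomial, mul_assoc, hpowE n i, ← Algebra.smul_def, smul_smul]
  have hroot : ∀ g : K[X], aeval L.A g = 0 → ∀ i, g.eval (L.θ i) = 0 := by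
    intro g hg i
    have h5 := hevalE g i
    rw [hg, zero_mul] at h5
    exact (smul_eq_zero.mp h5.symm).resolve_right (L.E_ne i)
  -- endgame
  have hPimon : (∏ i : Fin (d+1), (X - C (L.θ i))).Monic :=
    monic_prod_of_monic _ _ fun i _ => monic_X_sub_C _
  have hPideg : (∏ i : Fin (d+1), (X - C (L.θ i))).natDegree = d+1 := by
    rw [natDegree_prod _ _ fun i _ => X_sub_C_ne_zero _]
    simp
  have hPieval : ∀ i, (∏ i : Fin (d+1), (X - C (L.θ i))).eval (L.θ i) = 0 := by
    intro i
    rw [eval_prod]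
    exact Finset.prod_eq_zero (Finset.mem_univ i) (by simp)
  have hvan : ∀ g : K[X], (∀ i, g.eval (L.θ i) = 0) → g.natDegree < d+1 → g = 0 := by
    intro g hg hdeg
    exact Polynomial.eq_zero_of_natDegree_lt_card_of_eval_eq_zero g L.θ_inj hg (by simpa using hdeg)
  have hmond := hmon (d+1) le_rfl
  have hproots : ∀ i, (p (d+1)).eval (L.θ i) = 0 := hroot _ hP0
  have hprod : p (d+1) = ∏ i : Fin (d+1), (X - C (L.θ i)) := by
    by_contra hne
    have hr0 : p (d+1) - ∏ i : Fin (d+1), (X - C (L.θ i)) ≠ 0 := sub_ne_zero.mpr hne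
    have hdeq : (p (d+1)).degree = (∏ i : Fin (d+1), (X - C (L.θ i))).degree := by
      rw [degree_eq_natDegree hmond.1.ne_zero, degree_eq_natDegree hPimon.ne_zero,
        hmond.2, hPideg]
    have hlt := degree_sub_lt hdeq hmond.1.ne_zero
      (by rw [hmond.1.leadingCoeff, hPimon.leadingCoeff])
    have hnat : (p (d+1) - ∏ i : Fin (d+1), (X - C (L.θ i))).natDegree < d+1 := by
      rw [natDegree_lt_iff_degree_lt hr0]
      calc (p (d+1) - ∏ i : Fin (d+1), (X - C (L.θ i))).degree < (p (d+1)).degree := hlt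
        _ = ((d+1 : ℕ) : WithBot ℕ) := by rw [degree_eq_natDegree hmond.1.ne_zero, hmond.2]
    exact hr0 (hvan _ (fun i => by rw [eval_sub, hproots i, hPieval i, sub_zero]) hnat)
  have hint : IsIntegral K L.A := ⟨L.A.charpoly, L.A.charpoly_monic, by
    rw [← aeval_def]; exact L.A.aeval_self_charpoly⟩
  have hmdvd : minpoly K L.A ∣ p (d+1) := minpoly.dvd K L.A hP0
  have hmroots : ∀ i, (minpoly K L.A).eval (L.θ i) = 0 := hroot _ (minpoly.aeval K L.A)
  have hmmon : (minpoly K L.A).Monic := minpoly.monic hint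
  have hmdeg : d+1 ≤ (minpoly K L.A).natDegree := by
    by_contra hcon
    exact hmmon.ne_zero (hvan _ hmroots (by omega))
  have hmin : minpoly K L.A = p (d+1) :=
    Polynomial.eq_of_dvd_of_natDegree_le_of_leadingCoeff hmdvd (by rw [hmond.2]; exact hmdeg)
      (by rw [hmmon.leadingCoeff, hmond.1.leadingCoeff])
  have hcdeg : L.A.charpoly.natDegree = d+1 := by
    rw [Matrix.charpoly_natDegree_eq_dim]; simp
  have hchar : minpoly K L.A = L.A.charpoly :=
    Polynomial.eq_of_dvd_of_natDegree_le_of_leadingCoeff (L.A.minpoly_dvd_charpoly)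
      (by rw [hcdeg, hmin, hmond.2]) (by rw [hmmon.leadingCoeff, L.A.charpoly_monic.leadingCoeff])
  exact ⟨hmin.symm, by rw [← hchar, hmin], hprod⟩
end

section
/- Let Φ be a Leonard system with associated monic polynomials p_i (satisfying p_0 = 1, λp_i = p_{i+1} + a_i p_i + x_i p_{i−1}). Then for 0 ≤ i ≤ d: p_i(A) E*_0 = E*_i A^i E*_0, and moreover E*_i = p_i(A) E*_0 p_i(A) / (x_1 x_2 ⋯ x_i). -/
open Matrix Polynomial

section auxx
open Module

section aux
variable {K : Type*} [Field K] {m : ℕ}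

private lemma vv_mul_vv (v w v' w' : Fin m → K) (M : Matrix (Fin m) (Fin m) K) :
    vecMulVec v w * M * vecMulVec v' w' = (w ⬝ᵥ (M *ᵥ v')) • vecMulVec v w' := by
  ext i j
  simp only [mul_apply, vecMulVec_apply, Matrix.smul_apply, dotProduct, mulVec, smul_eq_mul,
    Finset.mul_sum, Finset.sum_mul]
  rw [Finset.sum_comm]
  apply Finset.sum_congr rfl; intro k _
  apply Finset.sum_congr rfl; intro l _
  ring

private lemma vv_trace (v w : Fin m → K) (M : Matrix (Fin m) (Fin m) K) :
    trace (vecMulVec v w * M) = w ⬝ᵥ (M *ᵥ v) := by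
  simp only [trace, diag, mul_apply, vecMulVec_apply, dotProduct, mulVec, smul_eq_mul]
  rw [Finset.sum_comm]
  apply Finset.sum_congr rfl; intro k _
  rw [Finset.mul_sum]
  apply Finset.sum_congr rfl; intro l _
  ring

private lemma vv_mul_vv' (v w v' w' : Fin m → K) :
    vecMulVec v w * vecMulVec v' w' = (w ⬝ᵥ v') • vecMulVec v w' := by
  ext i j
  simp only [mul_apply, vecMulVec_apply, Matrix.smul_apply, dotProduct, smul_eq_mul, Finset.sum_mul]
  apply Finset.sum_congr rfl; intro k _
  ring

private lemma rank_one_decomp (E : Matrix (Fin m) (Fin m) K)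
    (h1 : finrank K (LinearMap.range E.mulVecLin) = 1) (hidem : E * E = E) (hne : E ≠ 0) :
    ∃ v w : Fin m → K, E = vecMulVec v w ∧ w ⬝ᵥ v = 1 := by
  obtain ⟨v, hv0, hv⟩ := finrank_eq_one_iff'.mp h1
  have hcol : ∀ j : Fin m, ∃ c : K, c • (v : Fin m → K) = E *ᵥ Pi.single j 1 := by
    intro j
    obtain ⟨c, hc⟩ := hv ⟨E *ᵥ Pi.single j 1, ⟨Pi.single j 1, rfl⟩⟩
    exact ⟨c, congrArg Subtype.val hc⟩
  choose w hw using hcol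
  have hE : E = vecMulVec (v : Fin m → K) w := by
    ext i j
    have := congrFun (hw j) i
    simp only [Pi.smul_apply, smul_eq_mul, mulVec_single] at this
    simp only [vecMulVec_apply]
    simp only [MulOpposite.op_one, one_smul] at this; change w j * (v : Fin m → K) i = E i j at this
    rw [← this, mul_comm]
  refine ⟨v, w, hE, ?_⟩
  have h2 : (w ⬝ᵥ (v : Fin m → K)) • vecMulVec (v : Fin m → K) w = vecMulVec (v : Fin m → K) w := by
    rw [← vv_mul_vv', ← hE, hidem, hE]
  by_contra hne1
  have : ((w ⬝ᵥ (v : Fin m → K)) - 1) • vecMulVec (v : Fin m → K) w = 0 := by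
    rw [sub_smul, one_smul, h2, sub_self]
  rcases smul_eq_zero.mp this with h | h
  · exact hne1 (sub_eq_zero.mp h)
  · exact hne (hE ▸ h)

private lemma rank_one_of_orth (E : Fin m → Matrix (Fin m) (Fin m) K) (hne : ∀ i, E i ≠ 0)
    (hmul : ∀ i j, E i * E j = if i = j then E i else 0) (hsum : ∑ i, E i = 1) (i : Fin m) :
    finrank K (LinearMap.range (E i).mulVecLin) = 1 := by
  classical
  set V : Fin m → Submodule K (Fin m → K) := fun i => LinearMap.range (E i).mulVecLin with hV
  show finrank K ↥(V i) = 1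
  have hidem : ∀ i, E i * E i = E i := fun i => by simpa using hmul i i
  have hker : ∀ i j : Fin m, i ≠ j → V j ≤ LinearMap.ker (E i).mulVecLin := by
    rintro i j hij x ⟨y, rfl⟩
    simp only [LinearMap.mem_ker, mulVecLin_apply, mulVec_mulVec]
    rw [show E i * E j = 0 by simpa [hij] using hmul i j]
    simp
  have hdisj : ∀ i : Fin m, Disjoint (V i) (LinearMap.ker (E i).mulVecLin) := by
    intro i
    rw [Submodule.disjoint_def]
    rintro x ⟨y, rfl⟩ hx
    simp only [LinearMap.mem_ker, mulVecLin_apply, mulVec_mulVec, hidem i] at hx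
    simpa using hx
  have hfr : ∀ s : Finset (Fin m),
      finrank K ↥(s.sup V) = ∑ j ∈ s, finrank K ↥(V j) := by
    intro s
    induction s using Finset.induction_on with
    | empty => simp
    | @insert j s hj ih =>
      have hd : Disjoint (V j) (s.sup V) := by
        refine (hdisj j).mono_right ?_
        exact Finset.sup_le fun k hk => hker j k (fun h => hj (h ▸ hk))
      rw [Finset.sup_insert, Finset.sum_insert hj, ← ih]
      have := Submodule.finrank_sup_add_finrank_inf_eq (V j) (s.sup V)
      rw [hd.eq_bot] at this
      simpa using this
  have htop : (Finset.univ : Finset (Fin m)).sup V = ⊤ := by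
    rw [eq_top_iff]
    intro x _
    have hx : x = ∑ j : Fin m, E j *ᵥ x := by
      calc x = (1 : Matrix (Fin m) (Fin m) K) *ᵥ x := (one_mulVec x).symm
        _ = (∑ j, E j) *ᵥ x := by rw [hsum]
        _ = ∑ j : Fin m, E j *ᵥ x := by
            exact map_sum (mulVec.addMonoidHomLeft x) E Finset.univ
    rw [hx]
    exact Submodule.sum_mem _ fun j _ =>
      (Finset.le_sup (Finset.mem_univ j) : V j ≤ _) ⟨x, rfl⟩
  have hsumrank : ∑ j : Fin m, finrank K ↥(V j) = m := by
    rw [← hfr, htop]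
    simp [finrank_top]
  have hone : ∀ j, 1 ≤ finrank K ↥(V j) := by
    intro j
    rw [Nat.one_le_iff_ne_zero]
    intro h0
    apply hne j
    have hbot : V j = ⊥ := Submodule.finrank_eq_zero.mp h0
    ext k l
    have hmem : E j *ᵥ Pi.single l 1 ∈ V j := ⟨Pi.single l 1, rfl⟩
    rw [hbot] at hmem
    have := congrFun ((Submodule.mem_bot K).mp hmem) k
    simpa [mulVec_single] using this
  by_contra hne1
  have h2 : 2 ≤ finrank K ↥(V i) := by have := hone i; omega
  have : ∑ j : Fin m, (1:ℕ) < ∑ j : Fin m, finrank K ↥(V j) :=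
    Finset.sum_lt_sum (fun j _ => hone j) ⟨i, Finset.mem_univ i, by omega⟩
  simp [hsumrank] at this

private lemma aeval_transpose' (A : Matrix (Fin m) (Fin m) K) (q : K[X]) :
    aeval Aᵀ q = (aeval A q)ᵀ := by
  induction q using Polynomial.induction_on' with
  | add p q hp hq => simp [hp, hq]
  | monomial n c =>
    simp [aeval_monomial, transpose_mul, transpose_pow, smul_mul_assoc, mul_smul_comm,
      Algebra.algebraMap_eq_smul_one]

end aux

section core
variable {K : Type*} [Field K] {d : ℕ}

private lemma coreZ (A : Matrix (Fin (d+1)) (Fin (d+1)) K)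
    (F : ℕ → Matrix (Fin (d+1)) (Fin (d+1)) K)
    (hF_mul : ∀ i j, F i * F j = if i = j then F i else 0)
    (hF_sum : ∑ i ∈ Finset.range (d+1), F i = 1)
    (hzero : ∀ i j, i + 1 < j ∨ j + 1 < i → F i * A * F j = 0) :
    ∀ k j, k < j → F j * A ^ k * F 0 = 0 := by
  intro k
  induction k with
  | zero =>
    intro j hj
    rw [pow_zero, mul_one, hF_mul]
    simp [Nat.pos_iff_ne_zero.mp hj]
  | succ k ih =>
    intro j hj
    have hexp : F j * A ^ (k+1) * F 0
        = ∑ l ∈ Finset.range (d+1), F j * A * (F l * (A ^ k * F 0)) := by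
      calc F j * A ^ (k+1) * F 0 = F j * A * (1 * (A ^ k * F 0)) := by
            rw [pow_succ', one_mul]; simp only [mul_assoc]
        _ = F j * A * ((∑ l ∈ Finset.range (d+1), F l) * (A ^ k * F 0)) := by rw [hF_sum]
        _ = ∑ l ∈ Finset.range (d+1), F j * A * (F l * (A ^ k * F 0)) := by
            rw [Finset.sum_mul, Finset.mul_sum]
    rw [hexp]
    apply Finset.sum_eq_zero
    intro l _
    by_cases hc : j + 1 < l ∨ l + 1 < j
    · have h0 : F j * A * F l = 0 := hzero j l (by omega)
      calc F j * A * (F l * (A ^ k * F 0)) = F j * A * F l * (A ^ k * F 0) := by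
            simp only [mul_assoc]
        _ = 0 := by rw [h0, zero_mul]
    · push_neg at hc
      have hkl : k < l := by omega
      have h0 : F l * A ^ k * F 0 = 0 := ih l hkl
      calc F j * A * (F l * (A ^ k * F 0)) = F j * A * (F l * A ^ k * F 0) := by
            simp only [mul_assoc]
        _ = 0 := by rw [h0, mul_zero]

private lemma coreU (A : Matrix (Fin (d+1)) (Fin (d+1)) K)
    (F : ℕ → Matrix (Fin (d+1)) (Fin (d+1)) K)
    (hF_mul : ∀ i j, F i * F j = if i = j then F i else 0)
    (hF_sum : ∑ i ∈ Finset.range (d+1), F i = 1)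
    (hzero : ∀ i j, i + 1 < j ∨ j + 1 < i → F i * A * F j = 0) :
    ∀ n, n ≤ d → F (n+1) * A ^ (n+1) * F 0 = F (n+1) * A * (F n * A ^ n * F 0) := by
  have Z := coreZ A F hF_mul hF_sum hzero
  intro n hn
  have hexp : F (n+1) * A ^ (n+1) * F 0
      = ∑ l ∈ Finset.range (d+1), F (n+1) * A * (F l * (A ^ n * F 0)) := by
    calc F (n+1) * A ^ (n+1) * F 0 = F (n+1) * A * (1 * (A ^ n * F 0)) := by
          rw [pow_succ', one_mul]; simp only [mul_assoc]
      _ = F (n+1) * A * ((∑ l ∈ Finset.range (d+1), F l) * (A ^ n * F 0)) := by rw [hF_sum]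
      _ = ∑ l ∈ Finset.range (d+1), F (n+1) * A * (F l * (A ^ n * F 0)) := by
          rw [Finset.sum_mul, Finset.mul_sum]
  rw [hexp]
  rw [Finset.sum_eq_single_of_mem n (Finset.mem_range.mpr (by omega))]
  · simp only [mul_assoc]
  · intro l _ hln
    rcases Nat.lt_or_ge l n with h | h
    · have h0 : F (n+1) * A * F l = 0 := hzero (n+1) l (Or.inr (by omega))
      calc F (n+1) * A * (F l * (A ^ n * F 0)) = F (n+1) * A * F l * (A ^ n * F 0) := by
            simp only [mul_assoc]
        _ = 0 := by rw [h0, zero_mul]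
    · have hkl : n < l := by omega
      have h0 : F l * A ^ n * F 0 = 0 := Z n l hkl
      calc F (n+1) * A * (F l * (A ^ n * F 0)) = F (n+1) * A * (F l * A ^ n * F 0) := by
            simp only [mul_assoc]
        _ = 0 := by rw [h0, mul_zero]

private lemma coreR (A : Matrix (Fin (d+1)) (Fin (d+1)) K)
    (F : ℕ → Matrix (Fin (d+1)) (Fin (d+1)) K) (a x : ℕ → K)
    (hF_sum : ∑ i ∈ Finset.range (d+1), F i = 1)
    (hF_top : ∀ i, d < i → F i = 0)
    (hzero : ∀ i j, i + 1 < j ∨ j + 1 < i → F i * A * F j = 0)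
    (hx0 : x 0 = 0)
    (hdiag : ∀ i, i ≤ d → F i * A * F i = a i • F i)
    (hx1 : ∀ k, 1 ≤ k → k ≤ d → F (k-1) * A * F k * A * F (k-1) = x k • F (k-1))
    (hU : ∀ n, n ≤ d → F (n+1) * A ^ (n+1) * F 0 = F (n+1) * A * (F n * A ^ n * F 0)) :
    ∀ n, n ≤ d → A * (F n * A ^ n * F 0) =
      F (n+1) * A ^ (n+1) * F 0 + a n • (F n * A ^ n * F 0)
        + x n • (F (n-1) * A ^ (n-1) * F 0) := by
  intro n hn
  have hexp : A * (F n * A ^ n * F 0)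
      = ∑ j ∈ Finset.range (d+1), F j * A * (F n * A ^ n * F 0) := by
    calc A * (F n * A ^ n * F 0) = 1 * (A * (F n * A ^ n * F 0)) := (one_mul _).symm
      _ = (∑ j ∈ Finset.range (d+1), F j) * (A * (F n * A ^ n * F 0)) := by rw [hF_sum]
      _ = ∑ j ∈ Finset.range (d+1), F j * (A * (F n * A ^ n * F 0)) := Finset.sum_mul _ _ _
      _ = ∑ j ∈ Finset.range (d+1), F j * A * (F n * A ^ n * F 0) := by
          simp only [mul_assoc]
  have hterm : ∀ j ∈ Finset.range (d+1), F j * A * (F n * A ^ n * F 0) =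
      (if j = n+1 then F (n+1) * A ^ (n+1) * F 0 else 0)
      + (if j = n then a n • (F n * A ^ n * F 0) else 0)
      + (if 1 ≤ n ∧ j = n - 1 then x n • (F (n-1) * A ^ (n-1) * F 0) else 0) := by
    intro j _
    by_cases h1 : j = n + 1
    · subst h1
      rw [if_pos rfl, if_neg (by omega), if_neg (by omega), add_zero, add_zero]
      rw [hU n hn]
    by_cases h2 : j = n
    · subst h2
      rw [if_neg h1, if_pos rfl, if_neg (by omega), zero_add, add_zero]
      have : F j * A * (F j * A ^ j * F 0) = (F j * A * F j) * (A ^ j * F 0) := by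
        simp only [mul_assoc]
      rw [this, hdiag j hn, smul_mul_assoc]
      simp only [mul_assoc]
    by_cases h3 : 1 ≤ n ∧ j = n - 1
    · obtain ⟨hn1, hj⟩ := h3
      subst hj
      rw [if_neg h1, if_neg h2, if_pos ⟨hn1, rfl⟩, zero_add, zero_add]
      have hU' : F n * A ^ n * F 0 = F n * A * (F (n-1) * A ^ (n-1) * F 0) := by
        have := hU (n-1) (by omega)
        rwa [show n - 1 + 1 = n by omega] at this
      rw [hU']
      calc F (n-1) * A * (F n * A * (F (n-1) * A ^ (n-1) * F 0))
          = (F (n-1) * A * F n * A * F (n-1)) * (A ^ (n-1) * F 0) := by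
            simp only [mul_assoc]
        _ = (x n • F (n-1)) * (A ^ (n-1) * F 0) := by rw [hx1 n hn1 hn]
        _ = x n • (F (n-1) * A ^ (n-1) * F 0) := by
            rw [smul_mul_assoc]; simp only [mul_assoc]
    · rw [if_neg h1, if_neg h2, if_neg h3]
      simp only [add_zero]
      have h0 : F j * A * F n = 0 := by
        apply hzero
        omega
      calc F j * A * (F n * A ^ n * F 0) = F j * A * F n * (A ^ n * F 0) := by
            simp only [mul_assoc]
        _ = 0 := by rw [h0, zero_mul]
  rw [hexp, Finset.sum_congr rfl hterm]
  rw [Finset.sum_add_distrib, Finset.sum_add_distrib]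
  rw [Finset.sum_ite_eq' (Finset.range (d+1)) (n+1), Finset.sum_ite_eq' (Finset.range (d+1)) n]
  congr 1
  · congr 1
    · by_cases hc : n + 1 ∈ Finset.range (d+1)
      · rw [if_pos hc]
      · rw [if_neg hc]
        have : F (n+1) = 0 := hF_top (n+1) (by simp at hc; omega)
        rw [this, zero_mul, zero_mul]
    · rw [if_pos (Finset.mem_range.mpr (by omega))]
  · by_cases hn1 : 1 ≤ n
    · simp only [hn1, true_and]
      rw [Finset.sum_ite_eq' (Finset.range (d+1)) (n-1)]
      rw [if_pos (Finset.mem_range.mpr (by omega))]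
    · have hn0 : n = 0 := by omega
      subst hn0
      simp [hx0]

private lemma coreM (A : Matrix (Fin (d+1)) (Fin (d+1)) K)
    (F : ℕ → Matrix (Fin (d+1)) (Fin (d+1)) K) (a x : ℕ → K)
    (hR : ∀ n, n ≤ d → A * (F n * A ^ n * F 0) =
      F (n+1) * A ^ (n+1) * F 0 + a n • (F n * A ^ n * F 0)
        + x n • (F (n-1) * A ^ (n-1) * F 0))
    (hF00 : F 0 * F 0 = F 0)
    (p : ℕ → Polynomial K) (hp0 : p 0 = 1)
    (hrec : ∀ i : ℕ, i ≤ d → X * p i = p (i+1) + C (a i) * p i + C (x i) * p (i-1)) :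
    ∀ n, n ≤ d → aeval A (p n) * F 0 = F n * A ^ n * F 0 := by
  intro n
  induction n using Nat.strong_induction_on with
  | _ n ih =>
    match n with
    | 0 =>
      intro _
      rw [hp0]
      simp [hF00]
    | Nat.succ k =>
      intro hk
      have hrk := hrec k (by omega)
      have hpk : p (k+1) = X * p k - C (a k) * p k - C (x k) * p (k-1) := by
        rw [hrk]; ring
      have e1 : aeval A (p (k+1)) * F 0
          = A * (aeval A (p k) * F 0) - a k • (aeval A (p k) * F 0)
            - x k • (aeval A (p (k-1)) * F 0) := by
        rw [hpk]
        simp only [map_sub, _root_.map_mul, aeval_X, aeval_C, sub_mul, ← Algebra.smul_def,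
          smul_mul_assoc, mul_assoc]
      rw [e1, ih k (by omega) (by omega), ih (k-1) (by omega) (by omega)]
      rw [hR k (by omega)]
      abel

end core



end auxx

theorem stmt12 {K : Type*} [Field K] {d : ℕ} (L : LeonardSystem K d)
    (a x : ℕ → K)
    (ha : ∀ i : Fin (d+1), a (i:ℕ) = Matrix.trace (L.Es i * L.A))
    (hx0 : x 0 = 0)
    (hx : ∀ i : Fin (d+1), 1 ≤ (i:ℕ) →
      x (i:ℕ) = Matrix.trace (L.Es i * L.A * natIdx L.Es ((i:ℕ) - 1) * L.A))
    (p : ℕ → Polynomial K) (hp0 : p 0 = 1)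
    (hrec : ∀ i : ℕ, i ≤ d →
      Polynomial.X * p i = p (i+1) + Polynomial.C (a i) * p i + Polynomial.C (x i) * p (i-1))
    :
    ∀ i : Fin (d+1),
      (Polynomial.aeval L.A) (p (i:ℕ)) * L.Es 0 = L.Es i * L.A ^ (i:ℕ) * L.Es 0 ∧
      L.Es i = (∏ h ∈ Finset.Icc 1 (i:ℕ), x h)⁻¹ •
        ((Polynomial.aeval L.A) (p (i:ℕ)) * L.Es 0 * (Polynomial.aeval L.A) (p (i:ℕ))) := by
  classical
  -- rank-one decompositions of the `Es`
  have hidem : ∀ j, L.Es j * L.Es j = L.Es j := fun j => by simpa using L.Es_mul j j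
  have hdec : ∀ j, ∃ v w : Fin (d+1) → K, L.Es j = vecMulVec v w ∧ w ⬝ᵥ v = 1 := fun j =>
    rank_one_decomp _ (rank_one_of_orth L.Es L.Es_ne L.Es_mul L.Es_sum j) (hidem j) (L.Es_ne j)
  choose v w hvw hwv using hdec
  have sand : ∀ (j : Fin (d+1)) (M : Matrix (Fin (d+1)) (Fin (d+1)) K),
      L.Es j * M * L.Es j = Matrix.trace (L.Es j * M) • L.Es j := by
    intro j M
    rw [hvw j, vv_mul_vv, vv_trace]
  -- the `ℕ`-indexed family
  set F : ℕ → Matrix (Fin (d+1)) (Fin (d+1)) K := natIdx L.Es with hFdef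
  have hF : ∀ (n : ℕ) (h : n < d+1), F n = L.Es ⟨n, h⟩ := fun n h => dif_pos h
  have hFi : ∀ i : Fin (d+1), F (i:ℕ) = L.Es i := by
    intro i
    rw [hF (i:ℕ) i.isLt]
  have hFtop : ∀ n, d < n → F n = 0 := fun n h => dif_neg (by omega)
  have hF_mul : ∀ i j : ℕ, F i * F j = if i = j then F i else 0 := by
    intro i j
    by_cases hi : i < d + 1
    · by_cases hj : j < d + 1
      · rw [hF i hi, hF j hj, L.Es_mul]
        by_cases hij : i = j
        · subst hij
          rw [if_pos rfl, if_pos rfl]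
        · rw [if_neg (by simp only [ne_eq, Fin.mk.injEq]; exact hij), if_neg hij]
      · rw [hFtop j (by omega), mul_zero]
        have hij : i ≠ j := by omega
        rw [if_neg hij]
    · rw [hFtop i (by omega), zero_mul]
      by_cases hij : i = j
      · subst hij; rw [if_pos rfl]
      · rw [if_neg hij]
  have hF00 : F 0 * F 0 = F 0 := by rw [hF_mul]; simp
  have hF_sum : ∑ n ∈ Finset.range (d+1), F n = 1 := by
    rw [← Fin.sum_univ_eq_sum_range, ← L.Es_sum]
    exact Finset.sum_congr rfl fun j _ => hFi j
  have hzeroF : ∀ i j : ℕ, i + 1 < j ∨ j + 1 < i → F i * L.A * F j = 0 := by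
    intro i j hij
    by_cases hi : i < d + 1
    · by_cases hj : j < d + 1
      · rw [hF i hi, hF j hj]
        exact L.EsAEs_zero _ _ (by simpa using hij)
      · rw [hFtop j (by omega), mul_zero]
    · rw [hFtop i (by omega), zero_mul, zero_mul]
  have sandF : ∀ (n : ℕ) (h : n < d + 1) (M : Matrix (Fin (d+1)) (Fin (d+1)) K),
      F n * M * F n = Matrix.trace (F n * M) • F n := by
    intro n h M
    rw [hF n h]
    exact sand ⟨n, h⟩ M
  have hdiagF : ∀ n, n ≤ d → F n * L.A * F n = a n • F n := by
    intro n hn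
    have h : n < d + 1 := by omega
    rw [sandF n h L.A]
    congr 1
    rw [hF n h]
    exact (ha ⟨n, h⟩).symm
  have htr2 : ∀ k, 1 ≤ k → k ≤ d →
      Matrix.trace (F k * (L.A * F (k-1) * L.A)) = x k := by
    intro k h1 hk
    have h : k < d + 1 := by omega
    have hxk : x k = Matrix.trace (L.Es ⟨k, h⟩ * L.A * F (k-1) * L.A) := hx ⟨k, h⟩ h1
    rw [hxk, hF k h]
    congr 1
    simp only [mul_assoc]
  have hx2F : ∀ k, 1 ≤ k → k ≤ d → F k * L.A * F (k-1) * L.A * F k = x k • F k := by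
    intro k h1 hk
    have e : F k * L.A * F (k-1) * L.A * F k = F k * (L.A * F (k-1) * L.A) * F k := by
      simp only [mul_assoc]
    rw [e, sandF k (by omega), htr2 k h1 hk]
  have hx1F : ∀ k, 1 ≤ k → k ≤ d → F (k-1) * L.A * F k * L.A * F (k-1) = x k • F (k-1) := by
    intro k h1 hk
    have e : F (k-1) * L.A * F k * L.A * F (k-1) = F (k-1) * (L.A * F k * L.A) * F (k-1) := by
      simp only [mul_assoc]
    rw [e, sandF (k-1) (by omega)]
    congr 1
    calc Matrix.trace (F (k-1) * (L.A * F k * L.A))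
        = Matrix.trace ((F (k-1) * L.A) * (F k * L.A)) := by
          congr 1; simp only [mul_assoc]
      _ = Matrix.trace ((F k * L.A) * (F (k-1) * L.A)) := Matrix.trace_mul_comm _ _
      _ = Matrix.trace (F k * (L.A * F (k-1) * L.A)) := by
          congr 1; simp only [mul_assoc]
      _ = x k := htr2 k h1 hk
  -- nonvanishing of the x's
  have hxne : ∀ k, 1 ≤ k → k ≤ d → x k ≠ 0 := by
    intro k h1 hk
    have hik : k < d + 1 := by omega
    have hjk : k - 1 < d + 1 := by omega
    set i : Fin (d+1) := ⟨k, hik⟩ with hidef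
    set j : Fin (d+1) := ⟨k-1, hjk⟩ with hjdef
    have hBne : L.Es i * L.A * L.Es j ≠ 0 := L.EsAEs_ne i j (Or.inr (by
      simp only [hidef, hjdef]; omega))
    have hCne : L.Es j * L.A * L.Es i ≠ 0 := L.EsAEs_ne j i (Or.inl (by
      simp only [hidef, hjdef]; omega))
    have hB : L.Es i * L.A * L.Es j = (w i ⬝ᵥ (L.A *ᵥ v j)) • vecMulVec (v i) (w j) := by
      rw [hvw i, hvw j, vv_mul_vv]
    have hC : L.Es j * L.A * L.Es i = (w j ⬝ᵥ (L.A *ᵥ v i)) • vecMulVec (v j) (w i) := by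
      rw [hvw j, hvw i, vv_mul_vv]
    have hα : (w i ⬝ᵥ (L.A *ᵥ v j)) ≠ 0 := fun h => hBne (by rw [hB, h, zero_smul])
    have hβ : (w j ⬝ᵥ (L.A *ᵥ v i)) ≠ 0 := fun h => hCne (by rw [hC, h, zero_smul])
    have hxk : x k = (w j ⬝ᵥ (L.A *ᵥ v i)) * (w i ⬝ᵥ (L.A *ᵥ v j)) := by
      rw [← htr2 k h1 hk, hF k hik, hF (k-1) hjk]
      rw [show L.Es ⟨k, hik⟩ = L.Es i from rfl, show L.Es ⟨k-1, hjk⟩ = L.Es j from rfl]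
      rw [hvw i, vv_trace, hvw j]
      rw [← mulVec_mulVec, ← mulVec_mulVec]
      rw [show vecMulVec (v j) (w j) *ᵥ (L.A *ᵥ v i)
            = ((w j) ⬝ᵥ (L.A *ᵥ v i)) • v j from by
        ext l
        simp only [mulVec, dotProduct, vecMulVec_apply, Pi.smul_apply, smul_eq_mul,
          Finset.mul_sum, Finset.sum_mul]
        apply Finset.sum_congr rfl; intro s _
        apply Finset.sum_congr rfl; intro t _
        ring]
      rw [mulVec_smul, dotProduct_smul]
      simp [smul_eq_mul]
    rw [hxk]
    exact mul_ne_zero hβ hα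
  -- main recurrences, left-handed
  have hUF := coreU L.A F hF_mul hF_sum hzeroF
  have hRF := coreR L.A F a x hF_sum hFtop hzeroF hx0 hdiagF hx1F hUF
  have hMF := coreM L.A F a x hRF hF00 p hp0 hrec
  -- transposed family
  set G : ℕ → Matrix (Fin (d+1)) (Fin (d+1)) K := fun n => (F n)ᵀ with hGdef
  have hG_mul : ∀ i j : ℕ, G i * G j = if i = j then G i else 0 := by
    intro i j
    by_cases hij : i = j
    · subst hij
      rw [if_pos rfl, hGdef]
      simp only [← transpose_mul]
      rw [hF_mul]
      simp
    · rw [if_neg hij, hGdef]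
      simp only [← transpose_mul]
      rw [hF_mul, if_neg (fun h => hij h.symm)]
      simp
  have hG_sum : ∑ n ∈ Finset.range (d+1), G n = 1 := by
    rw [hGdef]
    rw [← transpose_sum, hF_sum, transpose_one]
  have hGtop : ∀ n, d < n → G n = 0 := by
    intro n hn
    rw [hGdef]
    simp [hFtop n hn]
  have hG00 : G 0 * G 0 = G 0 := by
    rw [hGdef]
    simp only [← transpose_mul, hF00]
  have hzeroG : ∀ i j : ℕ, i + 1 < j ∨ j + 1 < i → G i * L.Aᵀ * G j = 0 := by
    intro i j hij
    rw [hGdef]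
    simp only [← transpose_mul]
    rw [show F j * (L.A * F i) = F j * L.A * F i from by simp only [mul_assoc]]
    rw [hzeroF j i (by omega), transpose_zero]
  have hdiagG : ∀ n, n ≤ d → G n * L.Aᵀ * G n = a n • G n := by
    intro n hn
    rw [hGdef]
    simp only [← transpose_mul]
    rw [show F n * (L.A * F n) = F n * L.A * F n from by simp only [mul_assoc]]
    rw [hdiagF n hn, transpose_smul]
  have hx1G : ∀ k, 1 ≤ k → k ≤ d → G (k-1) * L.Aᵀ * G k * L.Aᵀ * G (k-1) = x k • G (k-1) := by
    intro k h1 hk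
    rw [hGdef]
    simp only [← transpose_mul]
    rw [show F (k-1) * (L.A * (F k * (L.A * F (k-1))))
          = F (k-1) * L.A * F k * L.A * F (k-1) from by simp only [mul_assoc]]
    rw [hx1F k h1 hk, transpose_smul]
  have hUG := coreU L.Aᵀ G hG_mul hG_sum hzeroG
  have hRG := coreR L.Aᵀ G a x hG_sum hGtop hzeroG hx0 hdiagG hx1G hUG
  have hMG := coreM L.Aᵀ G a x hRG hG00 p hp0 hrec
  -- right-handed versions obtained by transposing
  have hMright : ∀ n, n ≤ d → F 0 * aeval L.A (p n) = F 0 * (L.A ^ n * F n) := by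
    intro n hn
    have h := congrArg Matrix.transpose (hMG n hn)
    simp only [hGdef, transpose_mul, transpose_transpose, transpose_pow,
      aeval_transpose'] at h
    rw [← h]
  have hUright : ∀ n, n ≤ d →
      F 0 * (L.A ^ (n+1) * F (n+1)) = (F 0 * (L.A ^ n * F n)) * (L.A * F (n+1)) := by
    intro n hn
    have h := congrArg Matrix.transpose (hUG n hn)
    simp only [hGdef, transpose_mul, transpose_transpose, transpose_pow,
      aeval_transpose'] at h
    exact h
  -- the product identity, by induction
  have hGmain : ∀ n, n ≤ d → (F n * L.A ^ n * F 0) * (F 0 * (L.A ^ n * F n))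
      = (∏ h ∈ Finset.Icc 1 n, x h) • F n := by
    intro n
    induction n with
    | zero =>
      intro _
      rw [show Finset.Icc 1 0 = ∅ from Finset.Icc_eq_empty (by omega)]
      simp only [Finset.prod_empty, one_smul, pow_zero, mul_one, one_mul, hF00]
    | succ k ihk =>
      intro hk
      have hk' : k ≤ d := by omega
      have h21 := hx2F (k+1) (by omega) (by omega)
      norm_num at h21
      rw [hUF k hk', hUright k hk']
      calc (F (k+1) * L.A * (F k * L.A ^ k * F 0)) * ((F 0 * (L.A ^ k * F k)) * (L.A * F (k+1)))
          = F (k+1) * L.A * ((F k * L.A ^ k * F 0) * (F 0 * (L.A ^ k * F k))) * (L.A * F (k+1)) := by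
            simp only [mul_assoc]
        _ = F (k+1) * L.A * ((∏ h ∈ Finset.Icc 1 k, x h) • F k) * (L.A * F (k+1)) := by
            rw [ihk hk']
        _ = (∏ h ∈ Finset.Icc 1 k, x h) • (F (k+1) * L.A * F k * L.A * F (k+1)) := by
            simp only [mul_smul_comm, smul_mul_assoc]; simp only [mul_assoc]
        _ = (∏ h ∈ Finset.Icc 1 k, x h) • (x (k+1) • F (k+1)) := by rw [h21]
        _ = (∏ h ∈ Finset.Icc 1 (k+1), x h) • F (k+1) := by
            rw [smul_smul, Finset.prod_Icc_succ_top (by omega : 1 ≤ k + 1)]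
  -- conclusion
  intro i
  have hn : (i:ℕ) ≤ d := by omega
  have hFn : F (i:ℕ) = L.Es i := hFi i
  have hF0 : F 0 = L.Es 0 := by simpa using hFi 0
  have part1 : aeval L.A (p (i:ℕ)) * L.Es 0 = L.Es i * L.A ^ (i:ℕ) * L.Es 0 := by
    rw [← hFn, ← hF0]
    exact hMF (i:ℕ) hn
  refine ⟨part1, ?_⟩
  have hcne : (∏ h ∈ Finset.Icc 1 (i:ℕ), x h) ≠ 0 := by
    rw [Finset.prod_ne_zero_iff]
    intro h hh
    rw [Finset.mem_Icc] at hh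
    exact hxne h hh.1 (by omega)
  have h2 : aeval L.A (p (i:ℕ)) * L.Es 0 * aeval L.A (p (i:ℕ))
      = (∏ h ∈ Finset.Icc 1 (i:ℕ), x h) • L.Es i := by
    rw [part1, ← hFn, ← hF0]
    calc F (i:ℕ) * L.A ^ (i:ℕ) * F 0 * aeval L.A (p (i:ℕ))
        = F (i:ℕ) * L.A ^ (i:ℕ) * (F 0 * F 0) * aeval L.A (p (i:ℕ)) := by rw [hF00]
      _ = (F (i:ℕ) * L.A ^ (i:ℕ) * F 0) * (F 0 * aeval L.A (p (i:ℕ))) := by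
          simp only [mul_assoc]
      _ = (F (i:ℕ) * L.A ^ (i:ℕ) * F 0) * (F 0 * (L.A ^ (i:ℕ) * F (i:ℕ))) := by
          rw [hMright (i:ℕ) hn]
      _ = (∏ h ∈ Finset.Icc 1 (i:ℕ), x h) • F (i:ℕ) := hGmain (i:ℕ) hn
  rw [h2, smul_smul, inv_mul_cancel₀ hcne, one_smul]
end
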